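/- Let p, q, q' be integers with 0 < q < p, 0 < q' < p, gcd(p,q) = 1 and gcd(p,q') = 1. If q·q' ≡ 1 (mod p) or q·q' ≡ −1 (mod p), then |p,q| = |p,q'|. -/
import Mathlib

/-- The complexity `|p,q|` of a coprime pair of integers, defined recursively by
`|±1,0| = |0,±1| = |1,1| = 0`, `|p,q| = 1 + |p,q-p|` if `q > p > 0`,
`|p,q| = 1 + |p-q,q|` if `p > q > 0`, `|p,q| = |p,-q| + 1` if `p > 0 > q`, and
`|p,q| = |-p,-q|` if `p < 0` and `q ≠ 0`. -/
def pqComplexity (p q : ℤ) : ℕ :=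
  if h1 : p < 0 then
    if q = 0 then 0 else pqComplexity (-p) (-q)
  else if h2 : p = 0 then 0
  else
    if h3 : q < 0 then pqComplexity p (-q) + 1
    else if h4 : q = 0 then 0
    else
      if h5 : p < q then 1 + pqComplexity p (q - p)
      else if h6 : q < p then 1 + pqComplexity (p - q) q
      else 0
termination_by 3 * (p.natAbs + q.natAbs) + (if p < 0 then 2 else if q < 0 then 1 else 0)
decreasing_by
  all_goals (split_ifs <;> omega)

lemma pq_self {p : ℤ} (hp : 0 < p) : pqComplexity p p = 0 := by
  rw [pqComplexity]; split_ifs <;> first | rfl | omega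

lemma pq_step {p q : ℤ} (h0 : 0 < q) (h : q < p) :
    pqComplexity p q = 1 + pqComplexity (p - q) q := by
  rw [pqComplexity]; split_ifs <;> first | rfl | omega

lemma pq_step2 {p q : ℤ} (h0 : 0 < p) (h : p < q) :
    pqComplexity p q = 1 + pqComplexity p (q - p) := by
  rw [pqComplexity]; split_ifs <;> first | rfl | omega

lemma pq_symm (p q : ℤ) (hp : 0 < p) (hq : 0 < q) :
    pqComplexity p q = pqComplexity q p := by
  have H : ∀ n : ℕ, ∀ p q : ℤ, (p + q).natAbs = n → 0 < p → 0 < q →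
      pqComplexity p q = pqComplexity q p := by
    intro n
    induction n using Nat.strong_induction_on with
    | _ n ih =>
      intro p q hn hp hq
      rcases lt_trichotomy p q with h | h | h
      · rw [pq_step2 hp h, pq_step hp h]
        rw [ih (p + (q - p)).natAbs (by omega) p (q - p) rfl hp (by omega)]
      · subst h; rfl
      · rw [pq_step hq h, pq_step2 hq h]
        rw [ih ((p - q) + q).natAbs (by omega) (p - q) q rfl (by omega) hq]
  exact H _ p q rfl hp hq

lemma pq_mul_add (a : ℕ) (P Q : ℤ) (hP : 0 < P) (hQ : 0 < Q) :
    pqComplexity (a * P + Q) P = a + pqComplexity Q P := by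
  induction a with
  | zero => simp
  | succ a ih =>
    have h1 : ((a + 1 : ℕ) : ℤ) * P + Q = ((a : ℤ) * P + Q) + P := by push_cast; ring
    rw [h1, pq_step hP (by nlinarith [Int.natCast_nonneg a] : P < (a : ℤ) * P + Q + P)]
    have h2 : (a : ℤ) * P + Q + P - P = (a : ℤ) * P + Q := by ring
    rw [h2, ih]; omega

lemma pq_compl (p r : ℤ) (h0 : 0 < r) (h1 : r < p) :
    pqComplexity p r = pqComplexity p (p - r) := by
  rw [pq_step h0 h1, pq_step (by omega : (0:ℤ) < p - r) (by omega : p - r < p)]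
  have h2 : p - (p - r) = r := by ring
  rw [h2, pq_symm r (p - r) h0 (by omega)]

def cfA : List ℕ → ℤ
  | [] => 1
  | [a] => (a : ℤ)
  | a :: b :: t => (a : ℤ) * cfA (b :: t) + cfA t

def cfB : List ℕ → ℤ
  | [] => 0
  | [_] => 1
  | a :: b :: t => (a : ℤ) * cfB (b :: t) + cfB t

lemma cfA_cons {a : ℕ} {t : List ℕ} (ht : t ≠ []) :
    cfA (a :: t) = (a : ℤ) * cfA t + cfA t.tail := by
  cases t with
  | nil => exact absurd rfl ht
  | cons b s => rfl

lemma cfB_cons {a : ℕ} {t : List ℕ} (ht : t ≠ []) :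
    cfB (a :: t) = (a : ℤ) * cfB t + cfB t.tail := by
  cases t with
  | nil => exact absurd rfl ht
  | cons b s => rfl

lemma cf_append (l : List ℕ) (x : ℕ) :
    cfA (l ++ [x]) = (x : ℤ) * cfA l + cfB l ∧ cfB (l ++ [x]) = cfA l := by
  induction l using cfA.induct with
  | case1 => simp [cfA, cfB]
  | case2 a => simp [cfA, cfB]; ring
  | case3 a b t ih1 ih2 =>
    have e : (a :: b :: t) ++ [x] = a :: b :: (t ++ [x]) := by simp
    constructor
    · rw [e]
      show (a : ℤ) * cfA (b :: (t ++ [x])) + cfA (t ++ [x]) = _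
      have e2 : b :: (t ++ [x]) = (b :: t) ++ [x] := by simp
      rw [e2, ih1.1, ih2.1]
      show _ = (x : ℤ) * ((a : ℤ) * cfA (b :: t) + cfA t) + ((a:ℤ) * cfB (b::t) + cfB t)
      ring
    · rw [e]
      show (a : ℤ) * cfB (b :: (t ++ [x])) + cfB (t ++ [x]) = _
      have e2 : b :: (t ++ [x]) = (b :: t) ++ [x] := by simp
      rw [e2, ih1.2, ih2.2]
      rfl

lemma cf_reverse (l : List ℕ) (hl : l ≠ []) :
    cfA l.reverse = cfA l ∧ cfB l.reverse = cfA l.tail := by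
  induction l with
  | nil => exact absurd rfl hl
  | cons a t ih =>
    by_cases ht : t = []
    · subst ht; simp [cfA, cfB]
    · have hrev : (a :: t).reverse = t.reverse ++ [a] := by simp
      obtain ⟨h1, h2⟩ := ih ht
      obtain ⟨g1, g2⟩ := cf_append t.reverse a
      rw [hrev]
      constructor
      · rw [g1, h1, h2, cfA_cons ht]; try ring
      · rw [g2, h1]; rfl

lemma cf_det (l : List ℕ) (hl : l ≠ []) :
    cfA l * cfB l.tail - cfB l * cfA l.tail = (-1) ^ l.length := by
  induction l with
  | nil => exact absurd rfl hl
  | cons a t ih =>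
    by_cases ht : t = []
    · subst ht; simp [cfA, cfB]
    · rw [cfA_cons ht, cfB_cons ht]
      show ((a:ℤ) * cfA t + cfA t.tail) * cfB t - ((a:ℤ) * cfB t + cfB t.tail) * cfA t
          = (-1) ^ (a :: t).length
      have : ((a:ℤ) * cfA t + cfA t.tail) * cfB t - ((a:ℤ) * cfB t + cfB t.tail) * cfA t
          = -(cfA t * cfB t.tail - cfB t * cfA t.tail) := by ring
      rw [this, ih ht]
      simp [pow_succ]; try ring

lemma cfA_pos (l : List ℕ) (h : ∀ a ∈ l, 1 ≤ a) : 1 ≤ cfA l := by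
  induction l using cfA.induct with
  | case1 => simp [cfA]
  | case2 a => simpa [cfA] using h a (by simp)
  | case3 a b t ih1 ih2 =>
    have ha : (1 : ℤ) ≤ a := by exact_mod_cast h a (by simp)
    have h1 : 1 ≤ cfA (b :: t) := ih1 (fun x hx => h x (by simp [hx] at *; try tauto))
    have h2 : 1 ≤ cfA t := ih2 (fun x hx => h x (by simp [hx]; try tauto))
    show 1 ≤ (a : ℤ) * cfA (b :: t) + cfA t
    nlinarith

lemma cfA_tail_lt (l : List ℕ) (hl : l ≠ []) (h : ∀ a ∈ l, 1 ≤ a) :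
    1 ≤ cfA l.tail ∧ cfA l.tail ≤ cfA l ∧ (2 ≤ cfA l → cfA l.tail < cfA l) := by
  have htail : ∀ a ∈ l.tail, 1 ≤ a := fun a ha => h a (List.mem_of_mem_tail ha)
  have h1 : 1 ≤ cfA l.tail := cfA_pos _ htail
  refine ⟨h1, ?_, ?_⟩ <;> [skip; intro h2] <;>
  · cases l with
    | nil => exact absurd rfl hl
    | cons a t =>
      by_cases ht : t = []
      · subst ht
        have : (1 : ℤ) ≤ a := by exact_mod_cast h a (by simp)
        simp [cfA] at *
        omega
      · rw [cfA_cons ht]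
        have ha : (1 : ℤ) ≤ a := by exact_mod_cast h a (by simp)
        have g1 : 1 ≤ cfA t := cfA_pos _ (fun x hx => h x (by simp [hx]))
        have g2 : 1 ≤ cfA t.tail :=
          cfA_pos _ (fun x hx => h x (List.mem_cons_of_mem _ (List.mem_of_mem_tail hx)))
        show _
        simp only [List.tail_cons]
        nlinarith

lemma pq_cf (l : List ℕ) (hl : l ≠ []) (h : ∀ a ∈ l, 1 ≤ a) :
    pqComplexity (cfA l) (cfA l.tail) + 1 = l.sum := by
  induction l with
  | nil => exact absurd rfl hl
  | cons a t ih =>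
    by_cases ht : t = []
    · subst ht
      have ha : 1 ≤ a := h a (by simp)
      have e1 : cfA [a] = (a : ℤ) := rfl
      have e2 : cfA ([a] : List ℕ).tail = 1 := rfl
      rw [e1, e2]
      have e3 : ((a - 1 : ℕ) : ℤ) * 1 + 1 = (a : ℤ) := by
        push_cast [ha]; ring
      have := pq_mul_add (a - 1) 1 1 one_pos one_pos
      rw [e3, pq_self one_pos] at this
      simp only [List.sum_cons, List.sum_nil]
      omega
    · have hP : 1 ≤ cfA t := cfA_pos _ (fun x hx => h x (by simp [hx]))
      have hQ : 1 ≤ cfA t.tail :=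
        cfA_pos _ (fun x hx => h x (List.mem_cons_of_mem _ (List.mem_of_mem_tail hx)))
      have e : cfA (a :: t) = (a : ℤ) * cfA t + cfA t.tail := cfA_cons ht
      have e2 : (a :: t).tail = t := rfl
      rw [e, e2]
      rw [pq_mul_add a (cfA t) (cfA t.tail) (by omega) (by omega)]
      rw [pq_symm _ _ (by omega) (by omega)]
      have := ih ht (fun x hx => h x (by simp [hx]))
      have hsum : 1 ≤ t.sum := by
        cases t with
        | nil => exact absurd rfl ht
        | cons b s => have := h b (by simp); simp [List.sum_cons]; omega
      simp only [List.sum_cons]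
      omega

lemma cf_exists : ∀ n : ℕ, ∀ p q : ℤ, q.natAbs = n → 0 < q → q < p → IsCoprime p q →
    ∃ l : List ℕ, l ≠ [] ∧ (∀ a ∈ l, 1 ≤ a) ∧ cfA l = p ∧ cfA l.tail = q := by
  intro n
  induction n using Nat.strong_induction_on with
  | _ n ih =>
    intro p q hn hq0 hqp hcop
    by_cases hq1 : q = 1
    · refine ⟨[p.toNat], by simp, ?_, ?_, ?_⟩
      · intro a ha
        simp at ha
        omega
      · show ((p.toNat : ℕ) : ℤ) = p
        exact Int.toNat_of_nonneg (by omega)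
      · subst hq1; rfl
    · have hq2 : 2 ≤ q := by omega
      set r := p % q with hr
      have hr0 : 0 ≤ r := Int.emod_nonneg p (by omega)
      have hrq : r < q := Int.emod_lt_of_pos p hq0
      have hrne : r ≠ 0 := by
        intro h0
        have hdvd : q ∣ p := Int.dvd_of_emod_eq_zero h0
        obtain ⟨u, v, huv⟩ := hcop
        have : q ∣ 1 := by
          rw [← huv]
          exact dvd_add (Dvd.dvd.mul_left hdvd u) (Dvd.dvd.mul_left dvd_rfl v)
        have := Int.le_of_dvd one_pos this
        omega
      have hcop2 : IsCoprime q r := by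
        have : r = p + q * (-(p / q)) := by
          rw [hr, Int.emod_def]; ring
        rw [this]
        exact (hcop.symm).add_mul_left_right _
      obtain ⟨t, htne, htent, htA, htAt⟩ :=
        ih r.natAbs (by omega) q r rfl (by omega) hrq hcop2
      have hdiv1 : 1 ≤ p / q := by
        rw [Int.le_ediv_iff_mul_le hq0]; omega
      refine ⟨(p / q).toNat :: t, by simp, ?_, ?_, ?_⟩
      · intro a ha
        rcases List.mem_cons.mp ha with h1 | h1
        · subst h1; omega
        · exact htent a h1
      · rw [cfA_cons htne, htA, htAt]
        have hc : (((p / q).toNat : ℕ) : ℤ) = p / q := Int.toNat_of_nonneg (by omega)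
        rw [hc]
        have hdm := Int.mul_ediv_add_emod p q
        have hcm : p / q * q = q * (p / q) := mul_comm _ _
        omega
      · simpa using htA

/-- If `0 < q, q' < p`, `p` is coprime to both `q` and `q'`, and
`q * q' ≡ ±1 (mod p)`, then `|p,q| = |p,q'|`. -/
theorem pqComplexity_inverse_mod (p q q' : ℤ) (hq0 : 0 < q) (hqp : q < p)
    (hq'0 : 0 < q') (hq'p : q' < p) (h : Int.gcd p q = 1) (h' : Int.gcd p q' = 1)
    (hmod : q * q' ≡ 1 [ZMOD p] ∨ q * q' ≡ -1 [ZMOD p]) :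
    pqComplexity p q = pqComplexity p q' := by
  have hcop : IsCoprime p q := Int.isCoprime_iff_gcd_eq_one.mpr h
  have hp2 : 2 ≤ p := by omega
  obtain ⟨l, hlne, hlent, hA, hAt⟩ := cf_exists q.natAbs p q rfl hq0 hqp hcop
  set s := cfB l with hs
  set B := cfB l.tail with hB
  -- determinant relation
  have hdet : p * B - s * q = (-1) ^ l.length := by
    have := cf_det l hlne
    rw [hA, hAt] at this
    linarith [this]
  -- bounds on s
  have hrevne : l.reverse ≠ [] := by simpa using hlne
  have hrevent : ∀ a ∈ l.reverse, 1 ≤ a := fun a ha => hlent a (List.mem_reverse.mp ha)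
  have hrevA : cfA l.reverse = p := by rw [(cf_reverse l hlne).1, hA]
  have hseq : cfA l.reverse.tail = s := by
    have := (cf_reverse l.reverse hrevne).2
    rw [List.reverse_reverse] at this
    rw [← this, hs]
  obtain ⟨hs1', -, hslt'⟩ := cfA_tail_lt l.reverse hrevne hrevent
  have hs1 : 1 ≤ s := by rwa [hseq] at hs1'
  have hsp : s < p := by
    have := hslt' (by rw [hrevA]; omega)
    rwa [hseq, hrevA] at this
  -- complexity of (p, s) equals complexity of (p, q)
  have hcq : pqComplexity p q + 1 = l.sum := by
    have := pq_cf l hlne hlent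
    rwa [hA, hAt] at this
  have hcs : pqComplexity p s + 1 = l.sum := by
    have := pq_cf l.reverse hrevne hrevent
    rwa [hrevA, hseq, List.sum_reverse] at this
  have hqs : pqComplexity p q = pqComplexity p s := by omega
  -- the sign δ
  set δ : ℤ := (-1) ^ l.length with hδdef
  have hδ : δ = 1 ∨ δ = -1 := by
    rcases Nat.even_or_odd l.length with he | ho
    · left; rw [hδdef, he.neg_one_pow]
    · right; rw [hδdef, ho.neg_one_pow]
  have hqsB : q * s = p * B - δ := by rw [hδdef]; linarith [hdet]
  -- from hmod, get the dvd statement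
  have key : q' = s ∨ q' = p - s := by
    have hdvd : ∃ ε : ℤ, (ε = 1 ∨ ε = -1) ∧ p ∣ q * q' - ε := by
      rcases hmod with hm | hm
      · exact ⟨1, Or.inl rfl, (Int.ModEq.dvd hm.symm)⟩
      · exact ⟨-1, Or.inr rfl, (Int.ModEq.dvd hm.symm)⟩
    obtain ⟨ε, hε, k, hk⟩ := hdvd
    by_cases hcase : ε + δ = 0
    · left
      have hmul : q * (q' - s) = p * (k - B) := by linear_combination hk - hqsB + hcase
      have hpdvd : p ∣ q' - s := by
        apply hcop.dvd_of_dvd_mul_right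
        exact ⟨k - B, by linarith [hmul, mul_comm q (q' - s)] ⟩
      have : q' - s = 0 :=
        Int.eq_zero_of_abs_lt_dvd hpdvd (abs_lt.mpr ⟨by omega, by omega⟩)
      omega
    · right
      have hεδ : ε - δ = 0 := by rcases hε with h1 | h1 <;> rcases hδ with h2 | h2 <;> omega
      have hmul : q * (q' - (p - s)) = p * (k + B - q) := by
        linear_combination hk + hqsB + hεδ
      have hpdvd : p ∣ q' - (p - s) := by
        apply hcop.dvd_of_dvd_mul_right
        exact ⟨k + B - q, by linarith [hmul, mul_comm q (q' - (p - s))]⟩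
      have : q' - (p - s) = 0 :=
        Int.eq_zero_of_abs_lt_dvd hpdvd (abs_lt.mpr ⟨by omega, by omega⟩)
      omega
  rcases key with hk | hk
  · rw [hqs, hk]
  · rw [hqs, hk, ← pq_compl p s hs1 hsp]
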